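/- (Hermite substencil reconstruction) Let $u:\mathbb{R}\to\mathbb{R}$ be $C^3$, with cell averages $\bar u_i = \frac{1}{h}\int_{I_i} u\,dx$ and average derivatives $\Delta u_i = \frac{1}{h}\int_{I_i} u'(x)\,dx = \frac{u(x_{i+1/2}) - u(x_{i-1/2})}{h}$ on uniform cells $I_i$. Then $\frac{1}{6}\bar u_{j} + \frac{5}{6}\bar u_{j+1} - \frac{h}{3}\Delta u_{j+1} = u(x_{j+1/2}) + O(h^3)$ as $h\to 0$. -/

import Mathlib

open Filter Asymptotics intervalIntegral MeasureTheory

private lemma ipow_aux (a b x0 : ℝ) (n : ℕ) :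
    ∫ x in a..b, (x - x0) ^ n = ((b - x0) ^ (n + 1) - (a - x0) ^ (n + 1)) / (n + 1) := by
  have := intervalIntegral.integral_comp_sub_right (a := a) (b := b) (fun t => t ^ n) x0
  rw [this, integral_pow]

private lemma uIoc_abs {x0 x t : ℝ} (ht : t ∈ Set.uIoc x0 x) : |t - x0| ≤ |x - x0| := by
  have h := Set.uIoc_subset_uIcc ht
  rcases Set.mem_uIcc.mp h with ⟨h1, h2⟩ | ⟨h1, h2⟩ <;> rw [abs_le] <;>
    constructor <;> rcases abs_cases (x - x0) with ⟨e, he⟩ | ⟨e, he⟩ <;> linarith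

private lemma intInt_poly (x0 a b k : ℝ) (n : ℕ) :
    IntervalIntegrable (fun x => k * (x - x0) ^ n) volume a b :=
  ((continuous_const.mul ((continuous_id.sub continuous_const).pow n)).intervalIntegrable _ _)

/-- Hermite substencil reconstruction:
`1/6 ū_j + 5/6 ū_{j+1} - (h/3) Δu_{j+1} = u(x_{j+1/2}) + O(h³)`. -/
theorem stmt14 (u : ℝ → ℝ) (hu : ContDiff ℝ 3 u) (x0 : ℝ) :
    (fun h : ℝ =>
        1 / 6 * ((1 / h) * ∫ x in (x0 - h)..x0, u x)
          + 5 / 6 * ((1 / h) * ∫ x in x0..(x0 + h), u x)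
          - h / 3 * ((u (x0 + h) - u x0) / h)
          - u x0)
      =O[nhdsWithin 0 (Set.Ioi 0)] (fun h : ℝ => h ^ 3) := by
  -- basic smoothness facts
  have h3 : (3 : WithTop ℕ∞) = 2 + 1 := by norm_num
  have hu1 : ContDiff ℝ 2 (deriv u) := by
    have := (contDiff_succ_iff_deriv.mp (h3 ▸ hu)).2.2
    exact this
  have h2 : (2 : WithTop ℕ∞) = 1 + 1 := by norm_num
  have hu2 : ContDiff ℝ 1 (deriv (deriv u)) := by
    have := (contDiff_succ_iff_deriv.mp (h2 ▸ hu1)).2.2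
    exact this
  have hdu : Differentiable ℝ u := hu.differentiable (by norm_num)
  have hdu1 : Differentiable ℝ (deriv u) := hu1.differentiable (by norm_num)
  have hcu : Continuous u := hu.continuous
  have hc1 : Continuous (deriv u) := hu1.continuous
  set g : ℝ → ℝ := deriv (deriv u) with hg
  have hcg : Continuous g := hu2.continuous
  set c1 : ℝ := deriv u x0
  set c2 : ℝ := g x0
  set r1 : ℝ → ℝ := fun x => deriv u x - c1 - c2 * (x - x0) with hr1def
  set r : ℝ → ℝ := fun x => u x - u x0 - c1 * (x - x0) - c2 / 2 * (x - x0) ^ 2 with hrdef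
  have hcr1 : Continuous r1 := by fun_prop
  have hcr : Continuous r := by fun_prop
  -- FTC representations
  have hr1 : ∀ x : ℝ, r1 x = ∫ t in x0..x, (g t - c2) := by
    intro x
    rw [intervalIntegral.integral_sub (hcg.intervalIntegrable _ _)
      intervalIntegrable_const]
    rw [intervalIntegral.integral_deriv_eq_sub (fun t _ => hdu1 t)
      (hcg.intervalIntegrable _ _), intervalIntegral.integral_const]
    simp only [hr1def, smul_eq_mul]
    ring
  have hr : ∀ x : ℝ, r x = ∫ t in x0..x, r1 t := by
    intro x
    have e0 : r1 = fun t => deriv u t - c1 - c1 * 0 - c2 * (t - x0) ^ 1 := by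
      funext t; simp only [hr1def]; ring
    rw [e0]
    have i1 : IntervalIntegrable (fun t : ℝ => deriv u t - c1 - c1 * 0) volume x0 x :=
      ((hc1.sub continuous_const).sub continuous_const).intervalIntegrable _ _
    rw [intervalIntegral.integral_sub i1 (intInt_poly x0 _ _ _ _),
      intervalIntegral.integral_sub (show IntervalIntegrable (fun t : ℝ => deriv u t - c1) volume x0 x
          from (hc1.sub continuous_const).intervalIntegrable _ _)
        intervalIntegrable_const,
      intervalIntegral.integral_sub (hc1.intervalIntegrable _ _) intervalIntegrable_const,
      intervalIntegral.integral_deriv_eq_sub (fun t _ => hdu t) (hc1.intervalIntegrable _ _),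
      intervalIntegral.integral_const, intervalIntegral.integral_const,
      intervalIntegral.integral_const_mul, ipow_aux]
    simp only [hrdef, smul_eq_mul]
    push_cast
    ring
  -- the quadratic-at-x0 bound on r
  have hdiffg : DifferentiableAt ℝ g x0 := (hu2.differentiable (by norm_num)) x0
  obtain ⟨c, hc⟩ := hdiffg.isBigO_sub.bound
  obtain ⟨ε, hε, hball⟩ := Metric.eventually_nhds_iff.mp hc
  have hgb : ∀ x : ℝ, |x - x0| < ε → |g x - c2| ≤ |c| * |x - x0| := by
    intro x hx
    have := hball (y := x) (by simpa [Real.dist_eq] using hx)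
    simp only [Real.norm_eq_abs] at this
    calc |g x - c2| ≤ c * |x - x0| := this
      _ ≤ |c| * |x - x0| := by
        apply mul_le_mul_of_nonneg_right (le_abs_self c) (abs_nonneg _)
  have hr1b : ∀ x : ℝ, |x - x0| < ε → |r1 x| ≤ |c| * |x - x0| ^ 2 := by
    intro x hx
    rw [hr1 x]
    have : ∀ t ∈ Set.uIoc x0 x, ‖g t - c2‖ ≤ |c| * |x - x0| := by
      intro t ht
      have ht1 : |t - x0| ≤ |x - x0| := uIoc_abs ht
      calc ‖g t - c2‖ = |g t - c2| := rfl
        _ ≤ |c| * |t - x0| := hgb t (lt_of_le_of_lt ht1 hx)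
        _ ≤ |c| * |x - x0| := mul_le_mul_of_nonneg_left ht1 (abs_nonneg _)
    calc |∫ t in x0..x, (g t - c2)| ≤ |c| * |x - x0| * |x - x0| :=
          intervalIntegral.norm_integral_le_of_norm_le_const this
      _ = |c| * |x - x0| ^ 2 := by ring
  have hrb : ∀ x : ℝ, |x - x0| < ε → |r x| ≤ |c| * |x - x0| ^ 3 := by
    intro x hx
    rw [hr x]
    have : ∀ t ∈ Set.uIoc x0 x, ‖r1 t‖ ≤ |c| * |x - x0| ^ 2 := by
      intro t ht
      have ht1 : |t - x0| ≤ |x - x0| := uIoc_abs ht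
      calc ‖r1 t‖ = |r1 t| := rfl
        _ ≤ |c| * |t - x0| ^ 2 := hr1b t (lt_of_le_of_lt ht1 hx)
        _ ≤ |c| * |x - x0| ^ 2 := by
            apply mul_le_mul_of_nonneg_left _ (abs_nonneg _)
            exact pow_le_pow_left₀ (abs_nonneg _) ht1 2
    calc |∫ t in x0..x, r1 t| ≤ |c| * |x - x0| ^ 2 * |x - x0| :=
          intervalIntegral.norm_integral_le_of_norm_le_const this
      _ = |c| * |x - x0| ^ 3 := by ring
  -- rewrite the scheme in terms of r for h ≠ 0
  have key : ∀ h : ℝ, h ≠ 0 →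
      1 / 6 * ((1 / h) * ∫ x in (x0 - h)..x0, u x)
        + 5 / 6 * ((1 / h) * ∫ x in x0..(x0 + h), u x)
        - h / 3 * ((u (x0 + h) - u x0) / h)
        - u x0
      = 1 / 6 * ((1 / h) * ∫ x in (x0 - h)..x0, r x)
        + 5 / 6 * ((1 / h) * ∫ x in x0..(x0 + h), r x)
        - r (x0 + h) / 3 := by
    intro h hh
    have hsplit : ∀ a b : ℝ, ∫ x in a..b, u x
        = (∫ x in a..b, r x) + (u x0 * (b - a) + c1 * (((b - x0) ^ 2 - (a - x0) ^ 2) / 2)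
            + c2 / 2 * (((b - x0) ^ 3 - (a - x0) ^ 3) / 3)) := by
      intro a b
      have e0 : u = fun x => r x + (u x0 + c1 * (x - x0) ^ 1 + c2 / 2 * (x - x0) ^ 2) := by
        funext x; simp only [hrdef]; ring
      have i1 : IntervalIntegrable (fun x : ℝ => u x0 + c1 * (x - x0) ^ 1) volume a b :=
        intervalIntegrable_const.add (intInt_poly x0 _ _ _ _)
      have i2 : IntervalIntegrable
          (fun x : ℝ => u x0 + c1 * (x - x0) ^ 1 + c2 / 2 * (x - x0) ^ 2) volume a b :=
        i1.add (intInt_poly x0 _ _ _ _)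
      have this : ∫ x in a..b, u x = (∫ x in a..b, r x)
          + ((∫ x in a..b, (u x0 : ℝ)) + c1 * (∫ x in a..b, (x - x0) ^ 1)
             + c2 / 2 * ∫ x in a..b, (x - x0) ^ 2) := by
        conv_lhs => rw [e0]
        rw [intervalIntegral.integral_add (hcr.intervalIntegrable _ _) i2,
          intervalIntegral.integral_add i1 (intInt_poly x0 _ _ _ _),
          intervalIntegral.integral_add intervalIntegrable_const (intInt_poly x0 _ _ _ _),
          intervalIntegral.integral_const_mul, intervalIntegral.integral_const_mul]
      rw [this, intervalIntegral.integral_const, ipow_aux, ipow_aux]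
      simp only [smul_eq_mul]
      push_cast
      ring
    rw [hsplit (x0 - h) x0, hsplit x0 (x0 + h)]
    have hru : u (x0 + h) - u x0 = r (x0 + h) + c1 * h + c2 / 2 * h ^ 2 := by
      simp only [hrdef]; ring
    rw [hru]
    field_simp
    ring
  -- final O(h^3) bound
  rw [Asymptotics.isBigO_iff]
  refine ⟨4 / 3 * |c|, ?_⟩
  have hmem : ∀ᶠ h : ℝ in nhdsWithin 0 (Set.Ioi 0), h ∈ Set.Ioo 0 ε :=
    Ioo_mem_nhdsGT_of_mem ⟨le_refl 0, hε⟩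
  filter_upwards [hmem] with h hh
  obtain ⟨hh0, hhε⟩ := hh
  rw [key h hh0.ne']
  have hhabs : |h| = h := abs_of_pos hh0
  -- bound left integral
  have hbl : |∫ x in (x0 - h)..x0, r x| ≤ |c| * h ^ 3 * h := by
    have : ∀ t ∈ Set.uIoc (x0 - h) x0, ‖r t‖ ≤ |c| * h ^ 3 := by
      intro t ht
      rw [Set.uIoc_of_le (by linarith)] at ht
      obtain ⟨ht1, ht2⟩ := ht
      have habs : |t - x0| ≤ h := by rw [abs_le]; constructor <;> linarith
      calc ‖r t‖ = |r t| := rfl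
        _ ≤ |c| * |t - x0| ^ 3 := hrb t (lt_of_le_of_lt habs hhε)
        _ ≤ |c| * h ^ 3 := by
            apply mul_le_mul_of_nonneg_left _ (abs_nonneg _)
            exact pow_le_pow_left₀ (abs_nonneg _) habs 3
    calc |∫ x in (x0 - h)..x0, r x| ≤ |c| * h ^ 3 * |x0 - (x0 - h)| :=
          intervalIntegral.norm_integral_le_of_norm_le_const this
      _ = |c| * h ^ 3 * h := by rw [show x0 - (x0 - h) = h by ring, hhabs]
  have hbr : |∫ x in x0..(x0 + h), r x| ≤ |c| * h ^ 3 * h := by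
    have : ∀ t ∈ Set.uIoc x0 (x0 + h), ‖r t‖ ≤ |c| * h ^ 3 := by
      intro t ht
      rw [Set.uIoc_of_le (by linarith)] at ht
      obtain ⟨ht1, ht2⟩ := ht
      have habs : |t - x0| ≤ h := by rw [abs_le]; constructor <;> linarith
      calc ‖r t‖ = |r t| := rfl
        _ ≤ |c| * |t - x0| ^ 3 := hrb t (lt_of_le_of_lt habs hhε)
        _ ≤ |c| * h ^ 3 := by
            apply mul_le_mul_of_nonneg_left _ (abs_nonneg _)
            exact pow_le_pow_left₀ (abs_nonneg _) habs 3
    calc |∫ x in x0..(x0 + h), r x| ≤ |c| * h ^ 3 * |x0 + h - x0| :=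
          intervalIntegral.norm_integral_le_of_norm_le_const this
      _ = |c| * h ^ 3 * h := by rw [show x0 + h - x0 = h by ring, hhabs]
  have hbp : |r (x0 + h)| ≤ |c| * h ^ 3 := by
    have habs : |x0 + h - x0| = h := by rw [show x0 + h - x0 = h by ring, hhabs]
    calc |r (x0 + h)| ≤ |c| * |x0 + h - x0| ^ 3 := hrb _ (by rw [habs]; exact hhε)
      _ = |c| * h ^ 3 := by rw [habs]
  have h1h : (1 : ℝ) / h > 0 := by positivity
  simp only [Real.norm_eq_abs]
  have e1 : |1 / 6 * ((1 / h) * ∫ x in (x0 - h)..x0, r x)| ≤ 1 / 6 * |c| * h ^ 3 := by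
    rw [abs_mul, abs_mul, abs_of_pos h1h, abs_of_pos (by norm_num : (0:ℝ) < 1/6)]
    calc 1 / 6 * (1 / h * |∫ x in (x0 - h)..x0, r x|)
        ≤ 1 / 6 * (1 / h * (|c| * h ^ 3 * h)) := by
          apply mul_le_mul_of_nonneg_left _ (by norm_num)
          exact mul_le_mul_of_nonneg_left hbl h1h.le
      _ = 1 / 6 * |c| * h ^ 3 := by first | (field_simp; ring) | field_simp
  have e2 : |5 / 6 * ((1 / h) * ∫ x in x0..(x0 + h), r x)| ≤ 5 / 6 * |c| * h ^ 3 := by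
    rw [abs_mul, abs_mul, abs_of_pos h1h, abs_of_pos (by norm_num : (0:ℝ) < 5/6)]
    calc 5 / 6 * (1 / h * |∫ x in x0..(x0 + h), r x|)
        ≤ 5 / 6 * (1 / h * (|c| * h ^ 3 * h)) := by
          apply mul_le_mul_of_nonneg_left _ (by norm_num)
          exact mul_le_mul_of_nonneg_left hbr h1h.le
      _ = 5 / 6 * |c| * h ^ 3 := by first | (field_simp; ring) | field_simp
  have e3 : |r (x0 + h) / 3| ≤ 1 / 3 * |c| * h ^ 3 := by
    rw [abs_div, abs_of_pos (by norm_num : (0:ℝ) < 3)]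
    linarith
  have habs3 : |h ^ 3| = h ^ 3 := abs_of_pos (by positivity)
  rw [habs3]
  calc |1 / 6 * ((1 / h) * ∫ x in (x0 - h)..x0, r x)
        + 5 / 6 * ((1 / h) * ∫ x in x0..(x0 + h), r x) - r (x0 + h) / 3|
      ≤ |1 / 6 * ((1 / h) * ∫ x in (x0 - h)..x0, r x)|
        + |5 / 6 * ((1 / h) * ∫ x in x0..(x0 + h), r x)| + |r (x0 + h) / 3| := by
        apply (abs_sub _ _).trans
        gcongr
        exact abs_add_le _ _
    _ ≤ 1 / 6 * |c| * h ^ 3 + 5 / 6 * |c| * h ^ 3 + 1 / 3 * |c| * h ^ 3 := by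
        linarith
    _ ≤ 4 / 3 * |c| * h ^ 3 := by nlinarith [abs_nonneg c, pow_pos hh0 3]
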